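/- Let E = O_{P^1}(−1) ⊕ O_{P^1}(1) with parabolic structure at four points x_1,...,x_4 given by the two-step flag E|_{x_i} ⊃ O_{P^1}(−1)|_{x_i} ⊃ 0 with weights a_1(x_i) = 0, a_2(x_i) = 1 and K = 2. Then E is a semistable parabolic bundle of degree 0 on P^1 that is not homologically trivial. -/
import Mathlib

open MvPolynomial

lemma degree_fin2 (m : Fin 2 →₀ ℕ) : m.degree = m 0 + m 1 := by
  rw [Finsupp.degree, ← Fin.sum_univ_two (fun i => m i)]
  exact Finset.sum_subset (Finset.subset_univ _) (by simp [Finsupp.notMem_support_iff])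

lemma const_of_homog0 {k : Type*} [Field k] (f : MvPolynomial (Fin 2) k)
    (hf : f.IsHomogeneous 0) : f = C (f.coeff 0) := by
  ext m
  rw [coeff_C]
  split_ifs with h
  · subst h; rfl
  · exact hf.coeff_eq_zero (by simpa [Ne, Finsupp.degree_eq_zero_iff] using Ne.symm h)

lemma lin_of_homog1 {k : Type*} [Field k] (f : MvPolynomial (Fin 2) k)
    (hf : f.IsHomogeneous 1) :
    f = C (f.coeff (Finsupp.single 0 1)) * X 0 + C (f.coeff (Finsupp.single 1 1)) * X 1 := by
  ext m
  rw [coeff_add, coeff_C_mul, coeff_C_mul, coeff_X', coeff_X']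
  by_cases h0 : Finsupp.single (0 : Fin 2) 1 = m
  · have : ¬ Finsupp.single (1 : Fin 2) 1 = m := by
      rw [← h0]; intro h; have := DFunLike.congr_fun h 0; simp at this
    simp [h0, this]
  by_cases h1 : Finsupp.single (1 : Fin 2) 1 = m
  · simp [h0, h1]
  · simp only [h0, h1, if_false, mul_zero, add_zero]
    refine hf.coeff_eq_zero ?_
    rw [degree_fin2]
    intro hd
    rcases (by omega : (m 0 = 1 ∧ m 1 = 0) ∨ (m 0 = 0 ∧ m 1 = 1)) with ⟨h, h'⟩ | ⟨h, h'⟩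
    · exact h0 (Finsupp.ext (fun i => by fin_cases i <;> simp [h, h'])).symm
    · exact h1 (Finsupp.ext (fun i => by fin_cases i <;> simp [h, h'])).symm

open Classical in
/-- The bundle `E = O(-1) ⊕ O(1)` on `P¹` with parabolic structure at four points
`[p i] ∈ P¹` given by the flag `E|_{p i} ⊃ O(-1)|_{p i} ⊃ 0`, weights `a₁ = 0`, `a₂ = 1`,
`K = 2`, is a semistable parabolic bundle of degree `0` which is not homologically trivial.
Semistability: every sub-line-bundle `O(e) ⊂ E`, encoded by a pair of homogeneous polynomials
`(v 0, v 1)` of degrees `-1 - e` and `1 - e` with no common zero on `P¹`, has parabolic slope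
`e + (1/2) · #{i : the fiber of O(e) at p i lies in the flag line O(-1)|_{p i}}` at most
`μ_par(E) = 1`.  Non-triviality: the splitting type `(-1, 1)` of `E` is not `(0, 0)`. -/
theorem stmt3 (k : Type*) [Field k] [IsAlgClosed k] [CharZero k]
    (p : Fin 4 → k × k) (hp0 : ∀ i, p i ≠ 0)
    (hpd : ∀ i j, i ≠ j → ∀ c : k, p i ≠ c • p j) :
    (∀ (e : ℤ) (v : Fin 2 → MvPolynomial (Fin 2) k),
      (v 0).IsHomogeneous (-1 - e).toNat → ((-1 : ℤ) < e → v 0 = 0) →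
      (v 1).IsHomogeneous (1 - e).toNat → ((1 : ℤ) < e → v 1 = 0) →
      (∀ x y : k, ¬(x = 0 ∧ y = 0) →
        ¬(MvPolynomial.eval ![x, y] (v 0) = 0 ∧ MvPolynomial.eval ![x, y] (v 1) = 0)) →
      (e : ℚ) + (1 / 2) *
          (∑ i : Fin 4,
            if MvPolynomial.eval ![(p i).1, (p i).2] (v 1) = 0 then (1 : ℚ) else 0) ≤ 1)
    ∧ ¬(∀ i : Fin 2, (![(-1 : ℤ), 1]) i = 0) := by
  constructor
  · intro e v h0 h0' h1 h1' hnv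
    rcases lt_trichotomy e 0 with he | he | he
    · -- e ≤ -1 : crude bound
      have hsum : (∑ i : Fin 4,
          if MvPolynomial.eval ![(p i).1, (p i).2] (v 1) = 0 then (1 : ℚ) else 0) ≤ 4 := by
        have : ∀ i : Fin 4, (if MvPolynomial.eval ![(p i).1, (p i).2] (v 1) = 0
            then (1 : ℚ) else 0) ≤ 1 := fun i => by split <;> norm_num
        calc _ ≤ ∑ _i : Fin 4, (1 : ℚ) := Finset.sum_le_sum fun i _ => this i
          _ = 4 := by simp
      have : (e : ℚ) ≤ -1 := by exact_mod_cast (by omega : e ≤ -1)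
      linarith
    · -- e = 0 : impossible
      subst he
      exfalso
      have hv0 : v 0 = 0 := h0' (by norm_num)
      have h1' : (v 1).IsHomogeneous 1 := by simpa using h1
      set a := (v 1).coeff (Finsupp.single 0 1) with ha
      set b := (v 1).coeff (Finsupp.single 1 1) with hb
      have hlin := lin_of_homog1 (v 1) h1'
      rw [← ha, ← hb] at hlin
      by_cases hab : a = 0 ∧ b = 0
      · refine hnv 1 0 (by simp) ⟨by simp [hv0], ?_⟩
        rw [hlin, hab.1, hab.2]; simp
      · refine hnv b (-a) (fun hc => hab ⟨neg_eq_zero.mp hc.2, hc.1⟩) ⟨by simp [hv0], ?_⟩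
        rw [hlin]
        simp only [map_add, map_mul, MvPolynomial.eval_C, MvPolynomial.eval_X,
          Matrix.cons_val_zero, Matrix.cons_val_one, Matrix.head_cons]
        ring
    · -- e ≥ 1
      have hv0 : v 0 = 0 := h0' (by omega)
      rcases eq_or_lt_of_le (by omega : (1 : ℤ) ≤ e) with he1 | he2
      · -- e = 1 : v1 is a nonzero constant
        have h1c : (v 1).IsHomogeneous 0 := by rw [← he1] at h1; simpa using h1
        have hconst := const_of_homog0 (v 1) h1c
        have hc : (v 1).coeff 0 ≠ 0 := by
          intro hc
          exact hnv 1 0 (by simp) ⟨by simp [hv0], by rw [hconst, hc]; simp⟩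
        have hsum : (∑ i : Fin 4,
            if MvPolynomial.eval ![(p i).1, (p i).2] (v 1) = 0 then (1 : ℚ) else 0) = 0 := by
          refine Finset.sum_eq_zero fun i _ => ?_
          rw [if_neg]
          rw [hconst]; simpa using hc
        rw [hsum, ← he1]
        norm_num
      · -- e ≥ 2 : impossible
        exact absurd ⟨by simp [hv0], by simp [h1' he2]⟩ (hnv 1 0 (by simp))
  · intro h
    simpa using h 0
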